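/- arXiv:1009.0252 — 3 statements merged into one kernel-verified Lean document; each statement's English description precedes it below -/
import Mathlib

section
/- Let C be a smooth projective curve of genus g over an algebraically closed field k, with function field K = k(C). Then every nonzero element of K is a finite product of elements f_1 · ... · f_r of K, where each f_i has pole divisor of degree at most g + 2 (equivalently, at most g + 2 poles counted with multiplicity). -/
/-- A model of a smooth projective curve of genus `g` over an algebraically closed field `k`,
with function field `K = k(C)`: the data of the set of closed points (places) of the curve
together with the order (normalized valuation) of a function at each place, satisfying the
standard axioms, including finiteness of zeros and poles, degree zero of principal divisors,
and the Riemann(-Roch) inequality `ℓ(D) ≥ deg D + 1 - g`. -/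
structure SmoothProjectiveCurveModel (k : Type*) [Field k] (K : Type*) [Field K]
    [Algebra k K] (g : ℕ) where
  /-- the closed points of the curve -/
  Place : Type*
  /-- the order of vanishing of a function at a place (`⊤` for the zero function);
  a pole of order `n` at `p` corresponds to `ord p f = -n < 0` -/
  ord : Place → K → WithTop ℤ
  ord_eq_top_iff : ∀ p f, ord p f = ⊤ ↔ f = 0
  ord_mul : ∀ p f₁ f₂, ord p (f₁ * f₂) = ord p f₁ + ord p f₂
  ord_add : ∀ p f₁ f₂, min (ord p f₁) (ord p f₂) ≤ ord p (f₁ + f₂)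
  ord_algebraMap : ∀ p (c : k), c ≠ 0 → ord p (algebraMap k K c) = 0
  support_finite : ∀ f : K, f ≠ 0 → {p | ord p f ≠ 0}.Finite
  degree_principal_eq_zero : ∀ f : K, f ≠ 0 → ∑ᶠ p, (ord p f).untopD 0 = 0
  /-- Riemann–Roch inequality: for every divisor `D` the space
  `L(D) = {f : div(f) + D ≥ 0}` has `k`-dimension at least `deg D + 1 - g`. -/
  riemann_inequality : ∀ D : Place →₀ ℤ, ∃ s : Finset K,
    (∀ f ∈ s, ∀ p, ((-(D p) : ℤ) : WithTop ℤ) ≤ ord p f) ∧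
    LinearIndependent k (fun f : s => (f : K)) ∧
    (D.sum fun _ n => n) + 1 - (g : ℤ) ≤ (s.card : ℤ)

/-- The degree of the pole divisor of `f`, i.e. the number of poles of `f`
counted with multiplicity. -/
noncomputable def SmoothProjectiveCurveModel.poleDeg {k : Type*} [Field k] {K : Type*}
    [Field K] [Algebra k K] {g : ℕ} (C : SmoothProjectiveCurveModel k K g) (f : K) : ℤ :=
  ∑ᶠ p, max 0 (-(C.ord p f).untopD 0)


namespace SmoothProjectiveCurveModel

variable {k : Type*} [Field k] {K : Type*} [Field K] [Algebra k K] {g : ℕ}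
variable (C : SmoothProjectiveCurveModel k K g)

noncomputable def d (p : C.Place) (f : K) : ℤ := (C.ord p f).untopD 0

lemma ord_eq_coe_d {f : K} (hf : f ≠ 0) (p : C.Place) :
    C.ord p f = (C.d p f : WithTop ℤ) := by
  have h : C.ord p f ≠ ⊤ := fun h => hf ((C.ord_eq_top_iff p f).mp h)
  obtain ⟨n, hn⟩ := WithTop.ne_top_iff_exists.mp h
  rw [← hn]; simp [d, ← hn]

lemma d_mul {f₁ f₂ : K} (h₁ : f₁ ≠ 0) (h₂ : f₂ ≠ 0) (p : C.Place) :
    C.d p (f₁ * f₂) = C.d p f₁ + C.d p f₂ := by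
  have h := C.ord_mul p f₁ f₂
  rw [C.ord_eq_coe_d h₁, C.ord_eq_coe_d h₂, C.ord_eq_coe_d (mul_ne_zero h₁ h₂)] at h
  exact_mod_cast h

lemma d_support_finite {f : K} (hf : f ≠ 0) :
    (Function.support fun p => C.d p f).Finite :=
  (C.support_finite f hf).subset fun p hp => by
    simp only [Function.mem_support] at hp
    simp only [Set.mem_setOf_eq]
    intro h; exact hp (by simp [d, h])

lemma finsum_d {f : K} (hf : f ≠ 0) : ∑ᶠ p, C.d p f = 0 :=
  C.degree_principal_eq_zero f hf

lemma poleDeg_eq {f : K} : C.poleDeg f = ∑ᶠ p, max 0 (-(C.d p f)) := rfl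


variable {k : Type*} [Field k] {K : Type*} [Field K] [Algebra k K] {g : ℕ}
variable (C : SmoothProjectiveCurveModel k K g)

lemma exists_le_sum {α : Type*} (P : α →₀ ℤ) (hP : ∀ p, 0 ≤ P p) :
    ∀ m : ℕ, (m : ℤ) ≤ P.sum (fun _ n => n) →
      ∃ A : α →₀ ℤ, (∀ p, 0 ≤ A p) ∧ (∀ p, A p ≤ P p) ∧ A.sum (fun _ n => n) = m := by
  classical
  intro m
  induction m with
  | zero => exact fun _ => ⟨0, by simp, fun p => hP p, by simp⟩
  | succ m ih =>
    intro hm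
    obtain ⟨A, hA0, hAP, hAs⟩ := ih (le_trans (by exact_mod_cast Nat.le_succ m) hm)
    have hex : ∃ p, A p < P p := by
      by_contra h
      push_neg at h
      have hAeq : A = P := Finsupp.ext fun p => le_antisymm (hAP p) (h p)
      rw [hAeq] at hAs
      rw [hAs] at hm
      exact absurd hm (by push_cast; omega)
    obtain ⟨p, hp⟩ := hex
    refine ⟨A + Finsupp.single p 1, ?_, ?_, ?_⟩
    · intro q
      simp only [Finsupp.add_apply, Finsupp.single_apply]
      have := hA0 q; split_ifs <;> omega
    · intro q
      simp only [Finsupp.add_apply, Finsupp.single_apply]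
      have := hAP q; split_ifs with h
      · subst h; omega
      · omega
    · rw [Finsupp.sum_add_index' (fun _ => rfl) (fun _ _ _ => rfl), hAs,
        Finsupp.sum_single_index rfl]
      push_cast; ring


variable {k : Type*} [Field k] {K : Type*} [Field K] [Algebra k K] {g : ℕ}
variable (C : SmoothProjectiveCurveModel k K g)

lemma zmax_neg (x : ℤ) : max 0 (-x) = max 0 x - x := by
  rcases le_total x 0 with h | h
  · rw [max_eq_right (by omega), max_eq_left h]; ring
  · rw [max_eq_left (by omega), max_eq_right h]; ring

lemma zmax_le {x y : ℤ} (h0 : 0 ≤ y) (h : x ≤ y) : max 0 x ≤ y := max_le h0 h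

lemma max_support_subset {f : K} :
    (Function.support fun p => max 0 (-(C.d p f))) ⊆ Function.support fun p => C.d p f := by
  intro p hp
  simp only [Function.mem_support] at hp ⊢
  intro h; exact hp (by simp [h])

lemma key {f : K} (hf : f ≠ 0) (hbig : (g : ℤ) + 2 < C.poleDeg f) :
    ∃ f₁ f₂ : K, f₁ ≠ 0 ∧ f₂ ≠ 0 ∧ f = f₁ * f₂ ∧
      C.poleDeg f₁ ≤ (g : ℤ) + 2 ∧ C.poleDeg f₂ < C.poleDeg f := by
  classical
  -- the pole divisor P of f
  have hPfin : (Function.support fun p => max 0 (-(C.d p f))).Finite :=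
    (C.d_support_finite hf).subset C.max_support_subset
  set P : C.Place →₀ ℤ := Finsupp.ofSupportFinite _ hPfin with hPdef
  have hPapp : ∀ p, P p = max 0 (-(C.d p f)) := fun p => rfl
  have hPsum : P.sum (fun _ n => n) = C.poleDeg f := by
    rw [Finsupp.sum, C.poleDeg_eq,
      finsum_eq_sum_of_support_subset _ (s := P.support)
        (by rw [← Finsupp.fun_support_eq P]; exact fun x hx => hx)]
    exact Finset.sum_congr rfl fun p _ => hPapp p
  -- choose A ≤ P with deg A = g + 1
  obtain ⟨A, hA0, hAP, hAs⟩ := exists_le_sum P (fun p => le_max_left _ _) (g + 1)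
    (by rw [hPsum]; push_cast; omega)
  have hAs' : A.sum (fun _ n => n) = (g : ℤ) + 1 := by rw [hAs]; push_cast; ring
  -- choose a zero b of f
  have hzero : ∃ b, 0 < C.d b f := by
    by_contra h
    push_neg at h
    have h1 : ∀ p, max 0 (-(C.d p f)) = -(C.d p f) :=
      fun p => max_eq_right (by have := h p; omega)
    have h2 : C.poleDeg f = 0 := by
      rw [C.poleDeg_eq]
      calc ∑ᶠ p, max 0 (-(C.d p f)) = ∑ᶠ p, -(C.d p f) := finsum_congr h1
        _ = -∑ᶠ p, C.d p f := by rw [← finsum_neg_distrib]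
        _ = 0 := by rw [C.finsum_d hf]; ring
    omega
  obtain ⟨b, hb⟩ := hzero
  have hAb : A b = 0 := by
    have h1 := hAP b
    have h2 := hA0 b
    rw [hPapp b, max_eq_left (by omega)] at h1
    omega
  -- apply Riemann-Roch to D = A - b
  set D : C.Place →₀ ℤ := A - Finsupp.single b 1 with hDdef
  have hDapp : ∀ p, D p = A p - (if p = b then 1 else 0) := by
    intro p
    rw [hDdef, Finsupp.sub_apply, Finsupp.single_apply]
    congr 1
    simp [eq_comm]
  have hDsum : D.sum (fun _ n => n) = g := by
    rw [hDdef, Finsupp.sum_sub_index (fun _ _ _ => rfl), hAs',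
      Finsupp.sum_single_index rfl]
    ring
  obtain ⟨s, hmem, hli, hcard⟩ := C.riemann_inequality D
  have hsne : ∃ f₁, f₁ ∈ s := by
    rw [hDsum] at hcard
    have : 0 < s.card := by omega
    obtain ⟨f₁, hf₁⟩ := Finset.card_pos.mp this
    exact ⟨f₁, hf₁⟩
  obtain ⟨f₁, hf₁s⟩ := hsne
  have hf₁0 : f₁ ≠ 0 := hli.ne_zero (⟨f₁, hf₁s⟩ : s)
  have hord₁ : ∀ p, -(D p) ≤ C.d p f₁ := by
    intro p
    have h := hmem f₁ hf₁s p
    rw [C.ord_eq_coe_d hf₁0] at h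
    exact_mod_cast h
  -- the complementary factor
  set f₂ : K := f * f₁⁻¹ with hf₂def
  have hf₂0 : f₂ ≠ 0 := mul_ne_zero hf (inv_ne_zero hf₁0)
  have hmul : f = f₁ * f₂ := by
    rw [hf₂def, mul_comm, mul_assoc, inv_mul_cancel₀ hf₁0, mul_one]
  have hd₂ : ∀ p, C.d p f₂ = C.d p f - C.d p f₁ := by
    intro p
    have h : C.d p f = C.d p f₁ + C.d p f₂ := by
      conv_lhs => rw [hmul]
      exact C.d_mul hf₁0 hf₂0 p
    omega
  -- the big finset S
  set S : Finset C.Place :=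
    ((C.d_support_finite hf).toFinset ∪ (C.d_support_finite hf₁0).toFinset ∪
      (C.d_support_finite hf₂0).toFinset ∪ A.support) ∪ {b} with hSdef
  have hbS : b ∈ S := by simp [hSdef]
  have hSf : (Function.support fun p => C.d p f) ⊆ ↑S := by
    intro p hp; simp only [hSdef, Finset.coe_union, Set.mem_union]
    left; left; left; left; rwa [Set.Finite.coe_toFinset]
  have hSf₁ : (Function.support fun p => C.d p f₁) ⊆ ↑S := by
    intro p hp; simp only [hSdef, Finset.coe_union, Set.mem_union]
    left; left; left; right; rwa [Set.Finite.coe_toFinset]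
  have hSf₂ : (Function.support fun p => C.d p f₂) ⊆ ↑S := by
    intro p hp; simp only [hSdef, Finset.coe_union, Set.mem_union]
    left; left; right; rwa [Set.Finite.coe_toFinset]
  have hSA : (A.support : Set C.Place) ⊆ ↑S := by
    intro p hp; simp only [hSdef, Finset.coe_union, Set.mem_union]
    left; right; exact hp
  -- finsums as sums over S
  have hpole_eq : ∀ {h : K}, (Function.support fun p => C.d p h) ⊆ ↑S →
      C.poleDeg h = ∑ p ∈ S, max 0 (-(C.d p h)) := by
    intro h hsub
    rw [C.poleDeg_eq]
    exact finsum_eq_sum_of_support_subset _ (le_trans C.max_support_subset hsub)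
  have hsum0 : ∀ {h : K}, h ≠ 0 → (Function.support fun p => C.d p h) ⊆ ↑S →
      ∑ p ∈ S, C.d p h = 0 := by
    intro h hh hsub
    rw [← finsum_eq_sum_of_support_subset _ hsub]
    exact C.finsum_d hh
  -- poleDeg = zeroDeg over S
  have hpz : ∀ {h : K}, h ≠ 0 → (Function.support fun p => C.d p h) ⊆ ↑S →
      C.poleDeg h = ∑ p ∈ S, max 0 (C.d p h) := by
    intro h hh hsub
    rw [hpole_eq hsub]
    have heq : ∀ p ∈ S, max 0 (-(C.d p h)) = max 0 (C.d p h) - C.d p h :=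
      fun p _ => zmax_neg _
    rw [Finset.sum_congr rfl heq, Finset.sum_sub_distrib, hsum0 hh hsub, sub_zero]
  -- A sums over S
  have hAS : ∑ p ∈ S, A p = (g : ℤ) + 1 := by
    rw [← hAs', Finsupp.sum_of_support_subset A (by exact_mod_cast hSA) _ (fun _ _ => rfl)]
  refine ⟨f₁, f₂, hf₁0, hf₂0, hmul, ?_, ?_⟩
  · -- poleDeg f₁ ≤ g + 2
    rw [hpole_eq hSf₁]
    calc ∑ p ∈ S, max 0 (-(C.d p f₁)) ≤ ∑ p ∈ S, A p := by
          refine Finset.sum_le_sum fun p _ => ?_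
          have h1 := hord₁ p
          rw [hDapp p] at h1
          refine zmax_le (hA0 p) ?_
          split_ifs at h1 <;> omega
      _ ≤ (g : ℤ) + 2 := by rw [hAS]; omega
  · -- poleDeg f₂ < poleDeg f
    rw [hpz hf₂0 hSf₂, hpz hf hSf]
    have hpt : ∀ p ∈ S, max 0 (C.d p f₂) ≤ max 0 (C.d p f) - (if p = b then 1 else 0) := by
      intro p _
      have h1 := hord₁ p
      rw [hDapp p] at h1
      have h2 := hd₂ p
      have h3 := hAP p
      rw [hPapp p] at h3
      have h4 := hA0 p
      by_cases hpb : p = b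
      · subst hpb
        rw [hAb] at h1
        simp only [if_pos rfl] at h1 ⊢
        rw [max_eq_right (le_of_lt hb)]
        exact zmax_le (by omega) (by omega)
      · simp only [if_neg hpb, sub_zero] at h1 ⊢
        have hkey : C.d p f₂ ≤ max 0 (C.d p f) := by
          have hl := le_max_left (0 : ℤ) (C.d p f)
          have hr := le_max_right (0 : ℤ) (C.d p f)
          rcases max_choice (0 : ℤ) (-(C.d p f)) with h' | h' <;> rw [h'] at h3 <;> omega
        exact zmax_le (le_max_left _ _) hkey
    calc ∑ p ∈ S, max 0 (C.d p f₂)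
        ≤ ∑ p ∈ S, (max 0 (C.d p f) - (if p = b then 1 else 0)) :=
          Finset.sum_le_sum hpt
      _ = (∑ p ∈ S, max 0 (C.d p f)) - 1 := by
          rw [Finset.sum_sub_distrib, Finset.sum_ite_eq' S b (fun _ => (1:ℤ)), if_pos hbS]
      _ < ∑ p ∈ S, max 0 (C.d p f) := by omega

end SmoothProjectiveCurveModel

/-- Every nonzero element of the function field of a smooth projective curve of genus `g`
over an algebraically closed field is a finite product of elements whose pole divisor has
degree at most `g + 2`. -/
theorem product_of_functions_with_few_poles {k : Type*} [Field k] [IsAlgClosed k]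
    {K : Type*} [Field K] [Algebra k K] {g : ℕ} (C : SmoothProjectiveCurveModel k K g)
    (f : K) (hf : f ≠ 0) :
    ∃ (r : ℕ) (fs : Fin r → K), (∀ i, fs i ≠ 0) ∧ f = ∏ i, fs i ∧
      ∀ i, C.poleDeg (fs i) ≤ (g : ℤ) + 2 := by
  have H : ∀ n : ℕ, ∀ f : K, f ≠ 0 → C.poleDeg f ≤ (n : ℤ) →
      ∃ (r : ℕ) (fs : Fin r → K), (∀ i, fs i ≠ 0) ∧ f = ∏ i, fs i ∧
        ∀ i, C.poleDeg (fs i) ≤ (g : ℤ) + 2 := by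
    intro n
    induction n using Nat.strong_induction_on with
    | _ n ih =>
      intro f hf hle
      by_cases hcase : C.poleDeg f ≤ (g : ℤ) + 2
      · exact ⟨1, fun _ => f, fun _ => hf, by simp, fun _ => hcase⟩
      · push_neg at hcase
        obtain ⟨f₁, f₂, h₁0, h₂0, hmul, h₁le, h₂lt⟩ := C.key hf hcase
        have hn : n ≠ 0 := by
          intro h; rw [h] at hle; push_cast at hle; omega
        have hlt : n - 1 < n := by omega
        have hle₂ : C.poleDeg f₂ ≤ ((n - 1 : ℕ) : ℤ) := by
          have : ((n - 1 : ℕ) : ℤ) = (n : ℤ) - 1 := by omega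
          rw [this]; omega
        obtain ⟨r, fs, hne, hprod, hdeg⟩ := ih (n - 1) hlt f₂ h₂0 hle₂
        refine ⟨r + 1, Fin.cons f₁ fs, ?_, ?_, ?_⟩
        · intro i
          refine Fin.cases ?_ ?_ i
          · exact h₁0
          · exact hne
        · rw [Fin.prod_cons, ← hprod, hmul]
        · intro i
          refine Fin.cases ?_ ?_ i
          · exact h₁le
          · exact hdeg
  exact H (C.poleDeg f).toNat f hf (Int.self_le_toNat _)
end

section
/- Let K be a valued field with valuation ring O, and let u be an O-submodule of K^N of the form u = U_0 + O·a_1 + ... + O·a_m for some K-linear subspace U_0 ⊆ u and finitely many a_1,...,a_m ∈ K^N. Then u is a semi-lattice in K^N if and only if for every nonzero v ∈ K^N one has Kv ∩ u ≠ {0}. -/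
open Submodule

section Aux

variable {O K V : Type*} [CommRing O] [IsDomain O] [ValuationRing O] [Field K]
  [Algebra O K] [IsFractionRing O K] [AddCommGroup V] [Module K V] [Module O V]
  [IsScalarTower O K V]

private lemma exists_min_dvd {ι : Type*} (o : ι → O) (s : Finset ι) (hs : s.Nonempty) :
    ∃ j ∈ s, ∀ i ∈ s, o j ∣ o i := by
  classical
  induction s using Finset.induction_on with
  | empty => simp at hs
  | @insert a s ha ih =>
    rcases s.eq_empty_or_nonempty with rfl | hne
    · exact ⟨a, by simp⟩
    · obtain ⟨j, hj, hdvd⟩ := ih hne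
      rcases ValuationRing.dvd_total (o a) (o j) with h | h
      · refine ⟨a, Finset.mem_insert_self _ _, ?_⟩
        intro i hi
        rcases Finset.mem_insert.mp hi with rfl | hi
        · exact dvd_rfl
        · exact h.trans (hdvd i hi)
      · refine ⟨j, Finset.mem_insert_of_mem hj, ?_⟩
        intro i hi
        rcases Finset.mem_insert.mp hi with rfl | hi
        · exact h
        · exact hdvd i hi

end Aux

private lemma smul_cancel {O K V : Type*} [CommRing O] [IsDomain O] [Field K]
    [Algebra O K] [IsFractionRing O K] [AddCommGroup V] [Module K V] [Module O V]
    [IsScalarTower O K V] (c : O) (hc : c ≠ 0) {x y : V} (h : c • x = c • y) : x = y := by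
  have hc' : algebraMap O K c ≠ 0 := fun h0 =>
    hc (IsFractionRing.injective O K (by simpa using h0))
  have hinj := smul_right_injective V hc'
  have h' : algebraMap O K c • x = algebraMap O K c • y := by
    rw [algebraMap_smul, algebraMap_smul]; exact h
  exact hinj h' 

section Aux2

variable {O K V : Type*} [CommRing O] [IsDomain O] [ValuationRing O] [Field K]
  [Algebra O K] [IsFractionRing O K] [AddCommGroup V] [Module K V] [Module O V]
  [IsScalarTower O K V]

private lemma exists_linearIndependent_span_eq :
    ∀ (n : ℕ) (b : Fin n → V), ∃ (r : ℕ) (f : Fin r → Fin n),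
      LinearIndependent K (b ∘ f) ∧
      span O (Set.range (b ∘ f)) = span O (Set.range b) := by
  intro n
  induction n with
  | zero =>
    intro b
    exact ⟨0, id, linearIndependent_empty_type, rfl⟩
  | succ n ih =>
    intro b
    by_cases hb : LinearIndependent K b
    · exact ⟨n + 1, id, by simpa [Function.comp_def] using hb, by simp⟩
    · classical
      obtain ⟨g, hg0, i₀, hi₀⟩ := Fintype.not_linearIndependent_iff.mp hb
      obtain ⟨d, hd⟩ :=
        IsLocalization.exist_integer_multiples (nonZeroDivisors O) Finset.univ g
      have ho : ∀ i, ∃ c : O, algebraMap O K c = (d : O) • g i := fun i =>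
        RingHom.mem_range.mp (hd i (Finset.mem_univ i))
      choose o ho using ho
      have hdK : algebraMap O K (d : O) ≠ 0 := fun h0 =>
        nonZeroDivisors.ne_zero d.2 (IsFractionRing.injective O K (by simpa using h0))
      have hrel : ∑ i, o i • b i = 0 := by
        have step : ∀ i, o i • b i = (algebraMap O K (d : O)) • (g i • b i) := by
          intro i
          rw [← algebraMap_smul (A := K) (o i) (b i), ho i, Algebra.smul_def, mul_smul]
        calc ∑ i, o i • b i = ∑ i, (algebraMap O K (d : O)) • (g i • b i) := by
              simp_rw [step]
          _ = (algebraMap O K (d : O)) • ∑ i, g i • b i := by rw [Finset.smul_sum]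
          _ = 0 := by rw [hg0, smul_zero]
      have hoi₀ : o i₀ ≠ 0 := by
        intro h0
        apply hi₀
        have : (0 : K) = algebraMap O K (d : O) * g i₀ := by
          rw [← Algebra.smul_def, ← ho i₀, h0, map_zero]
        exact (mul_eq_zero.mp this.symm).resolve_left hdK
      -- pick j with o j ≠ 0 dividing all o i
      obtain ⟨j, hjmem, hjdvd⟩ := exists_min_dvd o
        (Finset.univ.filter (fun i => o i ≠ 0)) ⟨i₀, by simp [hoi₀]⟩
      have hoj : o j ≠ 0 := (Finset.mem_filter.mp hjmem).2
      have hdvd : ∀ i, o j ∣ o i := by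
        intro i
        by_cases h : o i = 0
        · rw [h]; exact dvd_zero _
        · exact hjdvd i (by simp [h])
      choose e he using hdvd
      -- b j is an O-combination of the other b i
      set S : Set V := Set.range (b ∘ j.succAbove) with hS
      have hSj : ∀ i, i ≠ j → b i ∈ S := by
        intro i hi
        rw [hS, Set.range_comp, Fin.range_succAbove]
        exact ⟨i, hi, rfl⟩
      have hbj : b j ∈ span O S := by
        have hsum : o j • (b j + ∑ i ∈ Finset.univ.erase j, e i • b i) = o j • 0 := by
          rw [smul_zero, smul_add, Finset.smul_sum]
          have : ∀ i ∈ Finset.univ.erase j, o j • (e i • b i) = o i • b i := by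
            intro i _
            rw [smul_smul, ← he i]
          rw [Finset.sum_congr rfl this, Finset.add_sum_erase _ (fun i => o i • b i)
            (Finset.mem_univ j)]
          exact hrel
        have := smul_cancel (K := K) (o j) hoj hsum
        have hbj' : b j = -∑ i ∈ Finset.univ.erase j, e i • b i := by
          rw [eq_neg_iff_add_eq_zero]
          exact this
        rw [hbj']
        exact neg_mem (sum_mem fun i hi =>
          smul_mem _ _ (subset_span (hSj i (Finset.ne_of_mem_erase hi))))
      have hspan : span O (Set.range b) = span O S := by
        apply le_antisymm
        · rw [span_le]
          rintro x ⟨i, rfl⟩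
          by_cases h : i = j
          · subst h; exact hbj
          · exact subset_span (hSj i h)
        · exact span_mono (by rw [hS, Set.range_comp]; exact Set.image_subset_range _ _)
      obtain ⟨r, f, h1, h2⟩ := ih (b ∘ j.succAbove)
      refine ⟨r, j.succAbove ∘ f, ?_, ?_⟩
      · rwa [← Function.comp_assoc]
      · rw [← Function.comp_assoc, h2, ← hspan]

end Aux2

/-- An `O`-submodule `u` of `K^N` (for `O` a valuation ring with fraction field `K`)
is a *semi-lattice* if there is a `K`-subspace `U₀ ⊆ u` such that `u/U₀` is a lattice in
`K^N/U₀`, i.e. `u = U₀ + O·a₁ + ⋯ + O·a_m` where the images of the `aᵢ` in `K^N/U₀` are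
`K`-linearly independent and, together with `U₀`, span `K^N`. -/
def IsSemiLattice (O : Type*) {K : Type*} [CommRing O] [Field K] [Algebra O K]
    {N : ℕ} (u : Submodule O (Fin N → K)) : Prop :=
  ∃ (U₀ : Submodule K (Fin N → K)) (m : ℕ) (a : Fin m → (Fin N → K)),
    U₀.restrictScalars O ≤ u ∧
    u = U₀.restrictScalars O ⊔ Submodule.span O (Set.range a) ∧
    LinearIndependent K (fun i => Submodule.Quotient.mk (p := U₀) (a i)) ∧
    Submodule.span K ((U₀ : Set (Fin N → K)) ∪ Set.range a) = ⊤

/-- Let `K` be a valued field with valuation ring `O` and let `u` be an `O`-submodule of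
`K^N` of the form `u = U₀ + O·a₁ + ⋯ + O·a_m` with `U₀ ⊆ u` a `K`-subspace. Then `u` is a
semi-lattice if and only if every line `K·v` (for `v ≠ 0`) meets `u` nontrivially. -/
theorem isSemiLattice_iff_lines_meet {K : Type*} [Field K] (O : Type*) [CommRing O]
    [IsDomain O] [ValuationRing O] [Algebra O K] [IsFractionRing O K]
    {N : ℕ} (u : Submodule O (Fin N → K)) (U₀ : Submodule K (Fin N → K))
    {m : ℕ} (a : Fin m → (Fin N → K))
    (hU₀ : U₀.restrictScalars O ≤ u)
    (hu : u = U₀.restrictScalars O ⊔ Submodule.span O (Set.range a)) :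
    IsSemiLattice O u ↔ ∀ v : Fin N → K, v ≠ 0 → ∃ c : K, c ≠ 0 ∧ c • v ∈ u := by
  constructor
  · rintro ⟨W, m', a'', hW, hu', hli, hspan⟩ v hv
    have hvmem : v ∈ Submodule.span K ((W : Set (Fin N → K)) ∪ Set.range a'') := by
      rw [hspan]; trivial
    rw [Submodule.span_union, Submodule.span_eq] at hvmem
    obtain ⟨w, hw, s, hs, rfl⟩ := Submodule.mem_sup.mp hvmem
    rw [mem_span_range_iff_exists_fun] at hs
    obtain ⟨c, rfl⟩ := hs
    obtain ⟨d, hd⟩ := IsLocalization.exist_integer_multiples (nonZeroDivisors O)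
      Finset.univ c
    set cK : K := algebraMap O K (d : O) with hcK
    have hcK0 : cK ≠ 0 := by
      intro h0
      refine nonZeroDivisors.ne_zero d.2 (IsFractionRing.injective O K ?_)
      rw [map_zero, ← hcK]
      exact h0
    refine ⟨cK, hcK0, ?_⟩
    rw [smul_add, Finset.smul_sum]
    apply u.add_mem
    · exact hW (W.smul_mem cK hw)
    · apply Submodule.sum_mem
      intro i _
      obtain ⟨oi, hoi⟩ := RingHom.mem_range.mp (hd i (Finset.mem_univ i))
      have heq : cK • (c i • a'' i) = oi • a'' i := by
        rw [smul_smul, hcK, ← Algebra.smul_def, ← hoi, algebraMap_smul]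
      rw [heq]
      have hai : a'' i ∈ u := by
        rw [hu']
        exact Submodule.mem_sup_right (Submodule.subset_span ⟨i, rfl⟩)
      exact u.smul_mem oi hai
  · intro hlines
    set π : (Fin N → K) →ₗ[O] ((Fin N → K) ⧸ U₀) := U₀.mkQ.restrictScalars O with hπ
    have hker : LinearMap.ker π = U₀.restrictScalars O := by
      ext x
      simp [hπ, Submodule.Quotient.mk_eq_zero]
    have key : ∀ S : Set (Fin N → K),
        U₀.restrictScalars O ⊔ span O S = Submodule.comap π (span O (π '' S)) := by
      intro S
      rw [← Submodule.map_span, Submodule.comap_map_eq, hker, sup_comm]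
    obtain ⟨r, f, h1, h2⟩ := exists_linearIndependent_span_eq (O := O) (K := K)
      m (fun i => π (a i))
    set a' : Fin r → (Fin N → K) := a ∘ f with ha'
    have hImg : π '' Set.range a' = Set.range ((fun i => π (a i)) ∘ f) := by
      rw [← Set.range_comp]
      rfl
    have hImg2 : π '' Set.range a = Set.range (fun i => π (a i)) := by
      rw [← Set.range_comp]
      rfl
    have hu' : u = U₀.restrictScalars O ⊔ span O (Set.range a') := by
      rw [hu, key, key, hImg, hImg2, h2]
    have hle : u ≤ (span K ((U₀ : Set (Fin N → K)) ∪ Set.range a')).restrictScalars O := by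
      rw [hu', sup_le_iff]
      exact ⟨fun x hx => subset_span (Or.inl hx),
        span_le.mpr fun x hx => subset_span (Or.inr hx)⟩
    refine ⟨U₀, r, a', hU₀, hu', ?_, ?_⟩
    · exact h1
    · rw [eq_top_iff]
      rintro v -
      by_cases hv : v = 0
      · rw [hv]; exact zero_mem _
      · obtain ⟨c, hc, hcv⟩ := hlines v hv
        have hmem : c • v ∈ span K ((U₀ : Set (Fin N → K)) ∪ Set.range a') := hle hcv
        have := Submodule.smul_mem _ c⁻¹ hmem
        rwa [smul_smul, inv_mul_cancel₀ hc, one_smul] at this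
end

section
/- Let K be an algebraically closed valued field with valuation ring O, maximal ideal M, residue field k, and residue map res : O → k. Let F ∈ O[X] be a polynomial whose reduction f ∈ k[X] (obtained by applying res to the coefficients) is nonzero. Then for every root α of f in k, there exists a ∈ O with F(a) = 0 and res(a) = α. In other words, res maps the set of roots of F lying in O onto the set of roots of f in k. -/
open Polynomial

/-- Key lemma: if `G ∈ O[X]` has nonzero reduction and its constant term reduces to `0`,
then `G` has a root in the maximal ideal of `O`. -/
lemma exists_root_residue_zero {K : Type*} [Field K] [IsAlgClosed K]
    (O : ValuationSubring K) (G : Polynomial O)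
    (hG : G.map (IsLocalRing.residue O) ≠ 0)
    (h0 : IsLocalRing.residue O (G.coeff 0) = 0) :
    ∃ b : O, G.eval b = 0 ∧ IsLocalRing.residue O b = 0 := by
  by_contra hcon
  push_neg at hcon
  -- the constant term of G is nonzero (otherwise b = 0 works)
  have hc0 : G.coeff 0 ≠ 0 := by
    intro h
    exact hcon 0 (by rw [← coeff_zero_eq_eval_zero]; exact h) (map_zero _)
  set ι : O →+* K := O.subtype with hιdef
  have hι : Function.Injective ι := Subtype.coe_injective
  set GK : Polynomial K := G.map ι with hGKdef
  have hGne : G ≠ 0 := fun h => hc0 (by rw [h, coeff_zero])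
  have hGK0 : GK ≠ 0 := (Polynomial.map_eq_zero_iff hι).not.mpr hGne
  -- evaluation compatibility
  have heval : ∀ b : O, GK.eval (ι b) = ι (G.eval b) := by
    intro b
    rw [hGKdef, eval_map, eval₂_hom]
  -- every root of GK is nonzero
  have hroot_ne : ∀ r ∈ GK.roots, r ≠ 0 := by
    intro r hr h0'
    have h1 : GK.eval r = 0 := isRoot_of_mem_roots hr
    rw [h0'] at h1
    have h2 : ι (G.eval 0) = 0 := by rw [← heval 0, map_zero]; exact h1
    have h3 : G.eval 0 = 0 := hι (by rw [h2, map_zero])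
    rw [← coeff_zero_eq_eval_zero] at h3
    exact hc0 h3
  -- every root of GK has inverse in O
  have hroot_inv : ∀ r ∈ GK.roots, r⁻¹ ∈ O := by
    intro r hr
    rcases O.mem_or_inv_mem r with h | h
    · -- r ∈ O : then it's a root of G in O, hence a unit by hcon
      have hev : G.eval ⟨r, h⟩ = 0 := by
        apply hι
        rw [map_zero, ← heval ⟨r, h⟩]
        exact isRoot_of_mem_roots hr
      have hu : IsUnit ((⟨r, h⟩ : O)) :=
        (IsLocalRing.residue_ne_zero_iff_isUnit _).mp (hcon ⟨r, h⟩ hev)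
      obtain ⟨u, hu⟩ := hu
      have hmul : ι (u : O) * ι ((u⁻¹ : Oˣ) : O) = 1 := by
        rw [← map_mul, u.mul_inv, map_one]
      have hι_u : ι (u : O) = r := by rw [hu]; rfl
      rw [hι_u] at hmul
      have hinv : r⁻¹ = ι ((u⁻¹ : Oˣ) : O) := (eq_inv_of_mul_eq_one_right hmul).symm
      rw [hinv]
      exact (((u⁻¹ : Oˣ) : O)).2
    · exact h
  -- the polynomial P over O whose image is ∏ (1 - r⁻¹ X)
  have hmem : ∀ r : {x // x ∈ GK.roots}, ((r : K))⁻¹ ∈ O := fun r => hroot_inv r r.2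
  set P : Polynomial O :=
    (GK.roots.attach.map
      (fun r : {x // x ∈ GK.roots} => 1 - C (⟨(r : K)⁻¹, hmem r⟩ : O) * X)).prod with hPdef
  set Q : Polynomial K :=
    (GK.roots.attach.map
      (fun r : {x // x ∈ GK.roots} => 1 - C ((r : K)⁻¹) * X)).prod with hQdef
  have hPmap : P.map ι = Q := by
    rw [hPdef, hQdef, ← coe_mapRingHom, map_multiset_prod, Multiset.map_map]
    congr 1
    apply Multiset.map_congr rfl
    intro r _
    simp only [Function.comp_apply, coe_mapRingHom, Polynomial.map_sub, Polynomial.map_one,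
      Polynomial.map_mul, Polynomial.map_C, Polynomial.map_X]
    rfl
  -- factor GK
  have hsplit : GK.Splits := IsAlgClosed.splits GK
  have heq := hsplit.eq_prod_roots
  rw [← GK.roots.attach_map_val, Multiset.map_map] at heq
  have hfac : ∀ r : {x // x ∈ GK.roots},
      (X : Polynomial K) - C (r : K) = C (-(r : K)) * (1 - C ((r : K)⁻¹) * X) := by
    intro r
    have h0' := hroot_ne r r.2
    rw [mul_one_sub, ← mul_assoc, ← C_mul, neg_mul, mul_inv_cancel₀ h0']
    simp only [map_neg, map_one]
    ring
  have heq2 : GK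
      = C (GK.leadingCoeff * (GK.roots.attach.map (fun r : {x // x ∈ GK.roots} => -(r : K))).prod) * Q := by
    have hC : C ((GK.roots.attach.map (fun r : {x // x ∈ GK.roots} => -(r : K))).prod)
        = (GK.roots.attach.map
            (fun r : {x // x ∈ GK.roots} => C (-(r : K)))).prod := by
      rw [map_multiset_prod, Multiset.map_map]
      apply congrArg
      apply Multiset.map_congr rfl
      intro r _
      rfl
    calc GK = C GK.leadingCoeff *
        (GK.roots.attach.map
          (fun r : {x // x ∈ GK.roots}
            => C (-(r : K)) * (1 - C ((r : K)⁻¹) * X))).prod := by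
          conv_lhs => rw [heq]
          congr 1
          apply congrArg Multiset.prod
          apply Multiset.map_congr rfl
          intro r _
          simp only [Function.comp_apply]
          exact hfac r
      _ = C GK.leadingCoeff *
          ((GK.roots.attach.map (fun r : {x // x ∈ GK.roots} => C (-(r : K)))).prod * Q) := by
          rw [hQdef, ← Multiset.prod_map_mul]
      _ = C (GK.leadingCoeff * (GK.roots.attach.map (fun r : {x // x ∈ GK.roots} => -(r : K))).prod) * Q := by
          rw [C_mul, hC, mul_assoc]
  -- identify the constant
  have hQ0 : Q.eval 0 = 1 := by
    rw [hQdef, eval_multiset_prod, Multiset.map_map]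
    have h1 : ∀ r ∈ GK.roots.attach,
        (Polynomial.eval 0 ∘ fun r : {x // x ∈ GK.roots} => 1 - C ((r : K)⁻¹) * X) r = 1 := by
      intro r _
      simp
    rw [Multiset.map_congr rfl h1]
    simp
  have hconst : GK.leadingCoeff * (GK.roots.attach.map (fun r : {x // x ∈ GK.roots} => -(r : K))).prod
      = ι (G.coeff 0) := by
    have h1 : GK.coeff 0 = ι (G.coeff 0) := coeff_map ι 0
    have h2 := congrArg (fun p => Polynomial.eval 0 p) heq2
    simp only [eval_mul, eval_C, hQ0, mul_one] at h2
    rw [← h1, coeff_zero_eq_eval_zero, h2]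
  rw [hconst] at heq2
  -- pull the factorization back to O
  have hG_eq : G = C (G.coeff 0) * P := by
    apply Polynomial.map_injective ι hι
    rw [Polynomial.map_mul, Polynomial.map_C, hPmap, ← hGKdef, heq2]
  -- contradiction: all coefficients of G reduce to zero
  apply hG
  ext n
  rw [coeff_map, hG_eq, coeff_C_mul, map_mul, h0, zero_mul, coeff_zero]

/-- Let `K` be an algebraically closed valued field with valuation ring `O`, residue field
`k = O/M` and residue map `res : O → k`. Let `F ∈ O[X]` be a polynomial whose reduction
`f ∈ k[X]` is nonzero. Then every root `α` of `f` in `k` lifts to a root `a ∈ O` of `F` with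
`res a = α`; in other words `res` maps the roots of `F` in `O` onto the roots of `f` in `k`. -/
theorem residue_maps_roots_onto_roots {K : Type*} [Field K] [IsAlgClosed K]
    (O : ValuationSubring K) (F : Polynomial O)
    (hF : F.map (IsLocalRing.residue O) ≠ 0)
    (α : IsLocalRing.ResidueField O)
    (hα : (F.map (IsLocalRing.residue O)).eval α = 0) :
    ∃ a : O, F.eval a = 0 ∧ IsLocalRing.residue O a = α := by
  obtain ⟨a₀, ha₀⟩ := IsLocalRing.residue_surjective (R := O) α
  set G : Polynomial O := F.comp (X + C a₀) with hGdef
  have hmap : G.map (IsLocalRing.residue O)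
      = (F.map (IsLocalRing.residue O)).comp (X + C α) := by
    rw [hGdef, Polynomial.map_comp, Polynomial.map_add, Polynomial.map_X,
      Polynomial.map_C, ha₀]
  have hG : G.map (IsLocalRing.residue O) ≠ 0 := by
    rw [hmap]
    simpa [comp_X_add_C_eq_zero_iff] using hF
  have h0 : IsLocalRing.residue O (G.coeff 0) = 0 := by
    have h1 : (G.map (IsLocalRing.residue O)).coeff 0 = 0 := by
      rw [hmap, coeff_zero_eq_eval_zero, eval_comp]
      simpa using hα
    rwa [coeff_map] at h1
  obtain ⟨b, hb, hb0⟩ := exists_root_residue_zero O G hG h0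
  refine ⟨b + a₀, ?_, ?_⟩
  · have : G.eval b = F.eval (b + a₀) := by
      rw [hGdef, eval_comp, eval_add, eval_X, eval_C]
    rwa [this] at hb
  · rw [map_add, hb0, zero_add, ha₀]
end
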